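/- Let 𝒦 be a Kakeya set in an affine plane of order q with |𝒦| > q² - min{⌈κ⌉(q-⌈κ⌉), q(q-⌊κ⌋)/(⌊κ⌋+1)} where κ = √(q+1/4) - 1/2. Then 𝒦 contains a (q+1-k)-knot for some integer k with 0 ≤ k < ⌈κ⌉, and |𝒦| ∈ [q² - kq + k(k+1)/2, q² - kq + k²]. -/

import Mathlib

/-- An affine plane of order `q`: `q²` points, every line has `q` points, the lines fall
into `q+1` parallel classes each of which partitions the point set (every point lies on a
unique line of each class), and two non-parallel lines meet in exactly one point. -/
structure AffinePlaneOrder (q : ℕ) where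
  Point : Type
  Line : Type
  mem : Point → Line → Prop
  pointCount : Nat.card Point = q ^ 2
  lineSize : ∀ l : Line, {p : Point | mem p l}.ncard = q
  parClass : Line → Fin (q + 1)
  point_class : ∀ (p : Point) (c : Fin (q + 1)), ∃! l : Line, parClass l = c ∧ mem p l
  meet : ∀ l m : Line, parClass l ≠ parClass m → ∃! p : Point, mem p l ∧ mem p m

/-- A Kakeya line set: one line from each parallel class. -/
def IsKakeyaLines {q : ℕ} (A : AffinePlaneOrder q) (L : Fin (q + 1) → A.Line) : Prop :=
  ∀ c, A.parClass (L c) = c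

/-- The Kakeya set determined by the lines `L`: all points covered by some line of `L`. -/
def kakeyaSet {q : ℕ} (A : AffinePlaneOrder q) (L : Fin (q + 1) → A.Line) : Set A.Point :=
  {p | ∃ c, A.mem p (L c)}

/-- The number of lines of `L` through `p`; `p` is a `j`-knot when this equals `j`. -/
noncomputable def knotCount {q : ℕ} (A : AffinePlaneOrder q) (L : Fin (q + 1) → A.Line) (p : A.Point) : ℕ :=
  {c : Fin (q + 1) | A.mem p (L c)}.ncard

open Finset
lemma union_lower {α ι : Type*} [DecidableEq α] [DecidableEq ι] (E : Finset ι) (f : ι → Finset α)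
    (h : ∀ i ∈ E, ∀ j ∈ E, i ≠ j → (f i ∩ f j).card ≤ 1) :
    2 * ∑ i ∈ E, (f i).card ≤ 2 * (E.biUnion f).card + E.card * (E.card - 1) := by
  induction E using Finset.induction_on with
  | empty => simp
  | @insert a E' ha ih =>
    have h' : ∀ i ∈ E', ∀ j ∈ E', i ≠ j → (f i ∩ f j).card ≤ 1 := fun i hi j hj =>
      h i (mem_insert_of_mem hi) j (mem_insert_of_mem hj)
    have hinter : (f a ∩ E'.biUnion f).card ≤ E'.card := by
      calc (f a ∩ E'.biUnion f).card ≤ (E'.biUnion (fun i => f a ∩ f i)).card := by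
            apply Finset.card_le_card
            intro x hx
            simp only [mem_inter, mem_biUnion] at hx ⊢
            obtain ⟨h1, i, hi, h2⟩ := hx
            exact ⟨i, hi, h1, h2⟩
        _ ≤ ∑ i ∈ E', (f a ∩ f i).card := Finset.card_biUnion_le
        _ ≤ ∑ i ∈ E', 1 := Finset.sum_le_sum (fun i hi => h a (mem_insert_self a E') i
            (mem_insert_of_mem hi) (fun he => ha (he ▸ hi)))
        _ = E'.card := by simp
    have hunion : (f a).card + (E'.biUnion f).card ≤ ((insert a E').biUnion f).card + E'.card := by
      rw [Finset.biUnion_insert]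
      have := Finset.card_union_add_card_inter (f a) (E'.biUnion f)
      omega
    have hih := ih h'
    rw [Finset.sum_insert ha, Finset.card_insert_of_notMem ha]
    have key : (E'.card+1)*(E'.card+1-1) = E'.card*(E'.card-1) + 2*E'.card := by
      rcases Nat.eq_zero_or_pos E'.card with h0 | h0
      · simp [h0]
      · obtain ⟨n, hn⟩ : ∃ n, E'.card = n + 1 := ⟨E'.card - 1, by omega⟩
        rw [hn]; simp [Nat.add_sub_cancel]; ring
    omega




open Finset

attribute [local instance] Classical.propDecidable

variable {q : ℕ} (A : AffinePlaneOrder q) (L : Fin (q + 1) → A.Line)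

noncomputable def Sf [Fintype A.Point] (c : Fin (q+1)) : Finset A.Point :=
  univ.filter (fun p => A.mem p (L c))

noncomputable def Kf [Fintype A.Point] : Finset A.Point :=
  univ.filter (fun p => ∃ c, A.mem p (L c))

noncomputable def jf [Fintype A.Point] (p : A.Point) : ℕ :=
  (univ.filter (fun c => A.mem p (L c))).card

variable [Fintype A.Point]

lemma Sf_card (c : Fin (q+1)) : (Sf A L c).card = q := by
  have h : {p | A.mem p (L c)} = ↑(Sf A L c) := by ext p; simp [Sf]
  have h2 := A.lineSize (L c)
  rw [h, Set.ncard_coe_finset] at h2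
  exact h2

lemma Kf_coe : ↑(Kf A L) = kakeyaSet A L := by
  ext p; simp [Kf, kakeyaSet]

lemma Kf_card : (kakeyaSet A L).ncard = (Kf A L).card := by
  rw [← Kf_coe, Set.ncard_coe_finset]

lemma jf_eq (p : A.Point) : knotCount A L p = jf A L p := by
  rw [knotCount, Set.ncard_eq_toFinset_card']
  congr 1
  ext c; simp [jf]

lemma sum_jf : ∑ p : A.Point, jf A L p = (q+1)*q := by
  unfold jf
  simp only [Finset.card_filter]
  rw [Finset.sum_comm]
  have : ∀ c : Fin (q+1), (∑ p : A.Point, if A.mem p (L c) then 1 else 0) = q := by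
    intro c
    rw [← Finset.card_filter]
    exact Sf_card A L c
  rw [Finset.sum_congr rfl (fun c _ => this c)]
  simp [mul_comm]

lemma inter_card (hL : IsKakeyaLines A L) {c c' : Fin (q+1)} (h : c ≠ c') :
    (univ.filter (fun p : A.Point => A.mem p (L c) ∧ A.mem p (L c'))).card = 1 := by
  have hne : A.parClass (L c) ≠ A.parClass (L c') := by
    rw [hL c, hL c']; exact h
  obtain ⟨p, hp, hu⟩ := A.meet (L c) (L c') hne
  rw [Finset.card_eq_one]
  exact ⟨p, by
    ext x
    simp only [Finset.mem_filter, Finset.mem_univ, true_and, Finset.mem_singleton]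
    exact ⟨fun hx => hu x hx, fun hx => hx ▸ hp⟩⟩

lemma sum_jf_sq (hL : IsKakeyaLines A L) :
    ∑ p : A.Point, jf A L p * (jf A L p - 1) = (q+1)*q := by
  have step1 : ∀ p : A.Point, jf A L p * (jf A L p - 1)
      = ((univ.filter (fun c => A.mem p (L c))).offDiag).card := by
    intro p
    rw [Finset.offDiag_card]
    unfold jf
    rcases Nat.eq_zero_or_pos (univ.filter (fun c => A.mem p (L c))).card with h0 | h0
    · simp [h0]
    · obtain ⟨n, hn⟩ : ∃ n, (univ.filter (fun c => A.mem p (L c))).card = n + 1 :=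
        ⟨(univ.filter (fun c => A.mem p (L c))).card - 1, by omega⟩
      rw [hn, Nat.add_sub_cancel, Nat.mul_succ, Nat.add_sub_cancel]
  rw [Finset.sum_congr rfl (fun p _ => step1 p)]
  have step2 : ∀ p : A.Point, ((univ.filter (fun c => A.mem p (L c))).offDiag)
      = (univ : Finset (Fin (q+1))).offDiag.filter
          (fun e => A.mem p (L e.1) ∧ A.mem p (L e.2)) := by
    intro p
    ext e
    simp only [Finset.mem_offDiag, Finset.mem_filter, Finset.mem_univ, true_and]
    tauto
  rw [Finset.sum_congr rfl (fun p _ => by rw [step2 p])]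
  simp only [Finset.card_filter]
  rw [Finset.sum_comm]
  have step3 : ∀ e ∈ (univ : Finset (Fin (q+1))).offDiag,
      (∑ p : A.Point, if A.mem p (L e.1) ∧ A.mem p (L e.2) then 1 else 0) = 1 := by
    intro e he
    rw [← Finset.card_filter]
    exact inter_card A L hL (Finset.mem_offDiag.mp he).2.2
  rw [Finset.sum_congr rfl step3]
  simp only [Finset.sum_const, smul_eq_mul, mul_one]
  rw [Finset.offDiag_card]
  simp only [Finset.card_univ, Fintype.card_fin]
  rw [Nat.mul_succ]
  omega
lemma meet_unique (hL : IsKakeyaLines A L) {c c' : Fin (q+1)} (h : c ≠ c') {x y : A.Point}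
    (hx1 : A.mem x (L c)) (hx2 : A.mem x (L c')) (hy1 : A.mem y (L c)) (hy2 : A.mem y (L c')) :
    x = y := by
  have hne : A.parClass (L c) ≠ A.parClass (L c') := by rw [hL c, hL c']; exact h
  obtain ⟨p, hp, hu⟩ := A.meet (L c) (L c') hne
  rw [hu x ⟨hx1, hx2⟩, hu y ⟨hy1, hy2⟩]

lemma pen_card (hL : IsKakeyaLines A L) (P : A.Point) (hq : 1 ≤ q) (hne : (univ.filter (fun c => A.mem P (L c))).Nonempty) :
    ((univ.filter (fun c => A.mem P (L c))).biUnion (Sf A L)).card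
      = (univ.filter (fun c => A.mem P (L c))).card * (q - 1) + 1 := by
  set T : Finset (Fin (q+1)) := univ.filter (fun c => A.mem P (L c)) with hT
  have hPT : ∀ c ∈ T, A.mem P (L c) := fun c hc => (Finset.mem_filter.mp hc).2
  have heq : T.biUnion (Sf A L) = insert P (T.biUnion (fun c => (Sf A L c).erase P)) := by
    ext x
    simp only [Finset.mem_biUnion, Finset.mem_insert, Finset.mem_erase, Sf,
      Finset.mem_filter, Finset.mem_univ, true_and]
    constructor
    · rintro ⟨c, hc, hx⟩
      by_cases hxP : x = P
      · exact Or.inl hxP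
      · exact Or.inr ⟨c, hc, hxP, hx⟩
    · rintro (rfl | ⟨c, hc, _, hx⟩)
      · obtain ⟨c, hc⟩ := hne
        exact ⟨c, hc, hPT c hc⟩
      · exact ⟨c, hc, hx⟩
  rw [heq]
  have hdisj : ∀ c ∈ T, ∀ c' ∈ T, c ≠ c' →
      Disjoint ((Sf A L c).erase P) ((Sf A L c').erase P) := by
    intro c hc c' hc' hcc'
    rw [Finset.disjoint_left]
    intro x hx hx'
    have h1 := Finset.mem_erase.mp hx
    have h2 := Finset.mem_erase.mp hx'
    have hx1 : A.mem x (L c) := by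
      have := h1.2; simp only [Sf, Finset.mem_filter] at this; exact this.2
    have hx2 : A.mem x (L c') := by
      have := h2.2; simp only [Sf, Finset.mem_filter] at this; exact this.2
    exact h1.1 (meet_unique A L hL hcc' hx1 hx2 (hPT c hc) (hPT c' hc'))
  rw [Finset.card_insert_of_notMem (by simp), Finset.card_biUnion hdisj]
  have : ∀ c ∈ T, ((Sf A L c).erase P).card = q - 1 := by
    intro c hc
    rw [Finset.card_erase_of_mem (by simp [Sf, hPT c hc]), Sf_card]
  rw [Finset.sum_congr rfl this, Finset.sum_const, smul_eq_mul]

lemma inter_pen_card (hL : IsKakeyaLines A L) (P : A.Point) {c : Fin (q+1)} (hc : ¬ A.mem P (L c)) :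
    (Sf A L c ∩ (univ.filter (fun c => A.mem P (L c))).biUnion (Sf A L)).card
      = (univ.filter (fun c => A.mem P (L c))).card := by
  set T : Finset (Fin (q+1)) := univ.filter (fun c => A.mem P (L c)) with hT
  have hPT : ∀ c' ∈ T, A.mem P (L c') := fun c' hc' => (Finset.mem_filter.mp hc').2
  have hne : ∀ c' ∈ T, A.parClass (L c') ≠ A.parClass (L c) := by
    intro c' hc'
    rw [hL c', hL c]
    intro h; exact hc (h ▸ hPT c' hc')
  symm
  apply Finset.card_bij (fun c' hc' => (A.meet (L c') (L c) (hne c' hc')).choose)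
  · intro c' hc'
    have hspec := (A.meet (L c') (L c) (hne c' hc')).choose_spec.1
    simp only [Finset.mem_inter, Finset.mem_biUnion, Sf, Finset.mem_filter, Finset.mem_univ,
      true_and]
    exact ⟨hspec.2, c', hc', hspec.1⟩
  · intro c1 hc1 c2 hc2 hxy
    by_contra hne12
    have s1 := (A.meet (L c1) (L c) (hne c1 hc1)).choose_spec.1
    have s2 := (A.meet (L c2) (L c) (hne c2 hc2)).choose_spec.1
    rw [hxy] at s1
    have hP : (A.meet (L c2) (L c) (hne c2 hc2)).choose = P :=
      meet_unique A L hL hne12 s1.1 s2.1 (hPT c1 hc1) (hPT c2 hc2)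
    exact hc (hP ▸ s2.2)
  · intro x hx
    simp only [Finset.mem_inter, Finset.mem_biUnion, Sf, Finset.mem_filter, Finset.mem_univ,
      true_and] at hx
    obtain ⟨hxc, c', hc', hxc'⟩ := hx
    refine ⟨c', hc', ?_⟩
    have hspec := (A.meet (L c') (L c) (hne c' hc')).choose_spec
    exact (hspec.2 x ⟨hxc', hxc⟩).symm


set_option maxHeartbeats 1000000 in
/-- Main theorem -/
theorem main_theorem {q : ℕ} (A : AffinePlaneOrder q) (L : Fin (q + 1) → A.Line)
    (hL : IsKakeyaLines A L)
    (hsize : ((kakeyaSet A L).ncard : ℝ) >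
      (q : ℝ) ^ 2 - min
        ((⌈Real.sqrt ((q : ℝ) + 1/4) - 1/2⌉ : ℝ) * ((q : ℝ) - (⌈Real.sqrt ((q : ℝ) + 1/4) - 1/2⌉ : ℝ)))
        ((q : ℝ) * ((q : ℝ) - (⌊Real.sqrt ((q : ℝ) + 1/4) - 1/2⌋ : ℝ)) /
          ((⌊Real.sqrt ((q : ℝ) + 1/4) - 1/2⌋ : ℝ) + 1))) :
    ∃ k : ℕ, (k : ℝ) < (⌈Real.sqrt ((q : ℝ) + 1/4) - 1/2⌉ : ℝ) ∧
      (∃ P : A.Point, knotCount A L P = q + 1 - k) ∧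
      (q : ℝ) ^ 2 - k * q + k * (k + 1) / 2 ≤ ((kakeyaSet A L).ncard : ℝ) ∧
      ((kakeyaSet A L).ncard : ℝ) ≤ (q : ℝ) ^ 2 - k * q + k ^ 2 := by
  classical
  -- dispatch q = 0
  rcases Nat.eq_zero_or_pos q with hq0 | hq
  · exfalso
    subst hq0
    have hsqrt : Real.sqrt ((0:ℕ) + 1/4) = 1/2 := by
      rw [show (((0:ℕ):ℝ) + 1/4) = (1/2)^2 by norm_num, Real.sqrt_sq (by norm_num)]
    have hK : kakeyaSet A L = {p | A.mem p (L 0)} := by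
      ext p
      constructor
      · rintro ⟨c, hc⟩; rwa [Subsingleton.elim (0 : Fin 1) c]
      · intro h; exact ⟨0, h⟩
    have hN : (kakeyaSet A L).ncard = 0 := by rw [hK, A.lineSize]
    rw [hN, hsqrt] at hsize
    norm_num at hsize
  -- now q ≥ 1
  have hfin : Finite A.Point := Nat.finite_of_card_ne_zero (by
    rw [A.pointCount]; exact (pow_pos hq 2).ne')
  haveI : Fintype A.Point := Fintype.ofFinite _
  set κr : ℝ := Real.sqrt ((q : ℝ) + 1/4) - 1/2 with hκdef
  set N : ℕ := (Kf A L).card with hNdef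
  have hNK : (kakeyaSet A L).ncard = N := Kf_card A L
  rw [hNK] at hsize ⊢
  -- κ basics
  have hκ0 : 0 ≤ κr := by
    have h1 : Real.sqrt (1/4) ≤ Real.sqrt ((q:ℝ) + 1/4) := by
      apply Real.sqrt_le_sqrt
      have : (0:ℝ) ≤ (q:ℝ) := Nat.cast_nonneg q
      linarith
    have h2 : Real.sqrt (1/4) = 1/2 := by
      rw [show ((1:ℝ)/4) = (1/2)^2 by norm_num, Real.sqrt_sq (by norm_num)]
    rw [hκdef]; linarith [h2 ▸ h1]
  have hκq : κr^2 + κr = q := by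
    have h1 : Real.sqrt ((q:ℝ) + 1/4) ^ 2 = (q:ℝ) + 1/4 := Real.sq_sqrt (by positivity)
    rw [hκdef]; nlinarith [h1]
  -- max knot
  have hKne : (Kf A L).Nonempty := by
    have h1 : (Sf A L 0).Nonempty := by
      rw [← Finset.card_pos, Sf_card]; omega
    obtain ⟨p, hp⟩ := h1
    refine ⟨p, ?_⟩
    simp only [Kf, Finset.mem_filter, Finset.mem_univ, true_and]
    exact ⟨0, (Finset.mem_filter.mp hp).2⟩
  obtain ⟨P, hPK, hPmax⟩ := Finset.exists_max_image (Kf A L) (jf A L) hKne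
  set m : ℕ := jf A L P with hmdef
  set T : Finset (Fin (q+1)) := Finset.univ.filter (fun c => A.mem P (L c)) with hTdef
  have hTm : T.card = m := rfl
  have hm1 : 1 ≤ m := by
    have := hPK
    simp only [Kf, Finset.mem_filter, Finset.mem_univ, true_and] at this
    obtain ⟨c, hc⟩ := this
    have : c ∈ T := by simp [hTdef, hc]
    have := Finset.card_pos.mpr ⟨c, this⟩
    omega
  have hmq1 : m ≤ q + 1 := by
    rw [← hTm]
    simpa using Finset.card_le_univ T
  set k : ℕ := q + 1 - m with hkdef
  have hmk : m + k = q + 1 := by omega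
  have hknot : knotCount A L P = q + 1 - k := by rw [jf_eq]; omega
  -- the pencil
  set Pen : Finset A.Point := T.biUnion (Sf A L) with hPendef
  have hPenCard : Pen.card = m * (q-1) + 1 := by
    rw [hPendef, pen_card A L hL P hq (by rw [← Finset.card_pos, hTm]; omega)]
    rw [hTm]
  set E : Finset (Fin (q+1)) := Finset.univ \ T with hEdef
  have hEcard : E.card = k := by
    rw [hEdef, Finset.card_sdiff_of_subset (Finset.subset_univ T), hTm]
    simp only [Finset.card_univ, Fintype.card_fin]
    omega
  have hEP : ∀ c ∈ E, ¬ A.mem P (L c) := by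
    intro c hc
    simp only [hEdef, hTdef, Finset.mem_sdiff, Finset.mem_filter, Finset.mem_univ,
      true_and] at hc
    exact hc
  have hSdiff : ∀ c ∈ E, (Sf A L c \ Pen).card = q - m := by
    intro c hc
    have h1 := Finset.card_inter_add_card_sdiff (Sf A L c) Pen
    have h2 : (Sf A L c ∩ Pen).card = m := by
      rw [hPendef, ← hTm, hTdef]
      exact inter_pen_card A L hL P (hEP c hc)
    have h3 := Sf_card A L c
    omega
  -- upper bound (nat)
  have hupperNat : N ≤ Pen.card + k * (q - m) := by
    have hsub : Kf A L ⊆ Pen ∪ E.biUnion (fun c => Sf A L c \ Pen) := by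
      intro p hp
      simp only [Kf, Finset.mem_filter, Finset.mem_univ, true_and] at hp
      obtain ⟨c, hc⟩ := hp
      rw [Finset.mem_union]
      by_cases hPen : p ∈ Pen
      · exact Or.inl hPen
      · refine Or.inr ?_
        rw [Finset.mem_biUnion]
        have hcE : c ∈ E := by
          simp only [hEdef, Finset.mem_sdiff, Finset.mem_univ, true_and]
          intro hcT
          exact hPen (Finset.mem_biUnion.mpr ⟨c, hcT, by simp [Sf, hc]⟩)
        exact ⟨c, hcE, Finset.mem_sdiff.mpr ⟨by simp [Sf, hc], hPen⟩⟩
    calc N ≤ (Pen ∪ E.biUnion (fun c => Sf A L c \ Pen)).card := Finset.card_le_card hsub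
      _ ≤ Pen.card + (E.biUnion (fun c => Sf A L c \ Pen)).card := Finset.card_union_le _ _
      _ ≤ Pen.card + ∑ c ∈ E, (Sf A L c \ Pen).card := by
          exact Nat.add_le_add_left Finset.card_biUnion_le _
      _ = Pen.card + k * (q - m) := by
          rw [Finset.sum_congr rfl hSdiff, Finset.sum_const, smul_eq_mul, hEcard]
  -- lower bound (nat)
  set U : ℕ := (E.biUnion (fun c => Sf A L c \ Pen)).card with hUdef
  have hlowerNat : Pen.card + U ≤ N := by
    have hsub : Pen ∪ E.biUnion (fun c => Sf A L c \ Pen) ⊆ Kf A L := by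
      intro p hp
      rw [Finset.mem_union] at hp
      simp only [Kf, Finset.mem_filter, Finset.mem_univ, true_and]
      rcases hp with hp | hp
      · obtain ⟨c, _, hc2⟩ := Finset.mem_biUnion.mp hp
        simp only [Sf, Finset.mem_filter] at hc2
        exact ⟨c, hc2.2⟩
      · obtain ⟨c, _, hc2⟩ := Finset.mem_biUnion.mp hp
        have := (Finset.mem_sdiff.mp hc2).1
        simp only [Sf, Finset.mem_filter] at this
        exact ⟨c, this.2⟩
    have hdisj : Disjoint Pen (E.biUnion (fun c => Sf A L c \ Pen)) := by
      rw [Finset.disjoint_right]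
      intro p hp
      obtain ⟨c, _, hc2⟩ := Finset.mem_biUnion.mp hp
      exact (Finset.mem_sdiff.mp hc2).2
    calc Pen.card + U = (Pen ∪ E.biUnion (fun c => Sf A L c \ Pen)).card :=
          (Finset.card_union_of_disjoint hdisj).symm
      _ ≤ N := Finset.card_le_card hsub
  have hUlow : 2 * (k * (q - m)) ≤ 2 * U + k * (k - 1) := by
    have hpair : ∀ c ∈ E, ∀ c' ∈ E, c ≠ c' →
        ((Sf A L c \ Pen) ∩ (Sf A L c' \ Pen)).card ≤ 1 := by
      intro c _ c' _ hcc'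
      calc ((Sf A L c \ Pen) ∩ (Sf A L c' \ Pen)).card
          ≤ (Finset.univ.filter (fun p : A.Point => A.mem p (L c) ∧ A.mem p (L c'))).card := by
            apply Finset.card_le_card
            intro p hp
            simp only [Finset.mem_inter, Finset.mem_sdiff, Sf, Finset.mem_filter,
              Finset.mem_univ, true_and] at hp ⊢
            exact ⟨hp.1.1, hp.2.1⟩
        _ = 1 := inter_card A L hL hcc'
    have := union_lower E (fun c => Sf A L c \ Pen) hpair
    rw [Finset.sum_congr rfl hSdiff, Finset.sum_const, smul_eq_mul, hEcard] at this
    omega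
  -- Claim A (nat): q*(q+1) + m*N ≤ m*((q+1)*q)
  have hjle : ∀ p : A.Point, jf A L p ≤ m := by
    intro p
    by_cases hp : p ∈ Kf A L
    · exact hPmax p hp
    · have : jf A L p = 0 := by
        rw [jf, Finset.card_eq_zero]
        rw [Finset.filter_eq_empty_iff]
        intro c _
        simp only [Kf, Finset.mem_filter, Finset.mem_univ, true_and] at hp
        exact fun h => hp ⟨c, h⟩
      omega
  have hjKf : ∀ p ∈ Kf A L, 1 ≤ jf A L p := by
    intro p hp
    simp only [Kf, Finset.mem_filter, Finset.mem_univ, true_and] at hp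
    obtain ⟨c, hc⟩ := hp
    have : c ∈ Finset.univ.filter (fun c => A.mem p (L c)) := by simp [hc]
    have := Finset.card_pos.mpr ⟨c, this⟩
    rw [jf]; omega
  have hjzero : ∀ p ∉ Kf A L, jf A L p = 0 := by
    intro p hp
    rw [jf, Finset.card_eq_zero, Finset.filter_eq_empty_iff]
    intro c _
    simp only [Kf, Finset.mem_filter, Finset.mem_univ, true_and] at hp
    exact fun h => hp ⟨c, h⟩
  have hclaimA : (q+1)*q + m * N ≤ m * ((q+1)*q) := by
    have hsum1 : ∑ p ∈ Kf A L, jf A L p = (q+1)*q := by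
      rw [Finset.sum_subset (Finset.subset_univ (Kf A L))
        (fun p _ hp => hjzero p hp), sum_jf A L]
    have hsum2 : ∑ p ∈ Kf A L, jf A L p * (jf A L p - 1) = (q+1)*q := by
      rw [Finset.sum_subset (Finset.subset_univ (Kf A L))
        (fun p _ hp => by simp [hjzero p hp]), sum_jf_sq A L hL]
    set S1 : ℕ := ∑ p ∈ Kf A L, (jf A L p - 1) with hS1def
    have hS1N : S1 + N = (q+1)*q := by
      rw [hS1def, hNdef, Finset.card_eq_sum_ones, ← Finset.sum_add_distrib, ← hsum1]
      apply Finset.sum_congr rfl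
      intro p hp
      have := hjKf p hp
      omega
    have hle : (q+1)*q ≤ m * S1 := by
      rw [← hsum2, hS1def, Finset.mul_sum]
      apply Finset.sum_le_sum
      intro p hp
      have h1 := hjle p
      have h2 := hjKf p hp
      have : jf A L p - 1 + 1 = jf A L p := by omega
      calc jf A L p * (jf A L p - 1) ≤ m * (jf A L p - 1) :=
        Nat.mul_le_mul_right _ h1
        _ = m * (jf A L p - 1) := rfl
    calc (q+1)*q + m * N ≤ m * S1 + m * N := Nat.add_le_add_right hle _
      _ = m * (S1 + N) := (Nat.mul_add m S1 N).symm
      _ = m * ((q+1)*q) := by rw [hS1N]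
    -- real casts
  have hk0 : (0:ℝ) ≤ (k:ℝ) := Nat.cast_nonneg k
  have hmr : (m:ℝ) = (q:ℝ) + 1 - (k:ℝ) := by
    have h := congrArg (Nat.cast : ℕ → ℝ) hmk
    push_cast at h
    linarith
  have hq1r : ((q-1:ℕ):ℝ) = (q:ℝ) - 1 := by
    rw [Nat.cast_sub hq]; norm_num
  have hqmr : (k:ℝ) - 1 ≤ ((q-m:ℕ):ℝ) := by
    rcases Nat.eq_zero_or_pos k with h0 | h0
    · rw [h0]; simp
      exact le_trans (by norm_num) (Nat.cast_nonneg _)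
    · have he : q - m = k - 1 := by omega
      rw [he, Nat.cast_sub h0]
      norm_num
  have hPenr : ((Pen.card : ℕ):ℝ) = (m:ℝ)*((q:ℝ)-1)+1 := by
    rw [hPenCard]; push_cast [hq1r]; ring
  -- real upper bound
  have hupR : (N:ℝ) ≤ (q:ℝ)^2 - (k:ℝ)*(q:ℝ) + (k:ℝ)^2 := by
    rcases Nat.eq_zero_or_pos k with h0 | h0
    · have hNle : N ≤ q^2 := by
        rw [hNdef, ← A.pointCount, Nat.card_eq_fintype_card, ← Finset.card_univ]
        exact Finset.card_le_card (Finset.subset_univ _)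
      rw [h0]
      push_cast
      have : (N:ℝ) ≤ ((q^2 : ℕ):ℝ) := Nat.cast_le.mpr hNle
      push_cast at this
      linarith
    · have he : q - m = k - 1 := by omega
      have hcast : (N:ℝ) ≤ (m:ℝ)*((q:ℝ)-1)+1 + (k:ℝ)*((k:ℝ)-1) := by
        calc (N:ℝ) ≤ ((Pen.card + k*(q-m) : ℕ):ℝ) := Nat.cast_le.mpr hupperNat
          _ = (m:ℝ)*((q:ℝ)-1)+1 + (k:ℝ)*((k:ℝ)-1) := by
              push_cast [hPenCard, hq1r, he, Nat.cast_sub h0]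
              ring
      rw [hmr] at hcast
      have hident : ((q:ℝ)+1-(k:ℝ))*((q:ℝ)-1)+1 + (k:ℝ)*((k:ℝ)-1)
          = (q:ℝ)^2 - (k:ℝ)*(q:ℝ) + (k:ℝ)^2 := by ring
      linarith
  -- real lower bound
  have hlowR : (q:ℝ)^2 - (k:ℝ)*(q:ℝ) + (k:ℝ)*((k:ℝ)+1)/2 ≤ (N:ℝ) := by
    have h1 : (m:ℝ)*((q:ℝ)-1)+1 + (U:ℝ) ≤ (N:ℝ) := by
      calc (m:ℝ)*((q:ℝ)-1)+1 + (U:ℝ) = ((Pen.card + U : ℕ):ℝ) := by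
            push_cast [hPenr]; ring
        _ ≤ (N:ℝ) := Nat.cast_le.mpr hlowerNat
    have hkk : ((k*(k-1) : ℕ):ℝ) = (k:ℝ)*((k:ℝ)-1) := by
      rcases Nat.eq_zero_or_pos k with h0 | h0
      · rw [h0]; simp
      · rw [Nat.cast_mul, Nat.cast_sub h0]; norm_num
    have h2 : 2*((k:ℝ)*((q-m:ℕ):ℝ)) ≤ 2*(U:ℝ) + (k:ℝ)*((k:ℝ)-1) := by
      calc 2*((k:ℝ)*((q-m:ℕ):ℝ)) = ((2*(k*(q-m)) : ℕ):ℝ) := by push_cast; ring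
        _ ≤ ((2*U + k*(k-1) : ℕ):ℝ) := Nat.cast_le.mpr hUlow
        _ = 2*(U:ℝ) + (k:ℝ)*((k:ℝ)-1) := by rw [Nat.cast_add, Nat.cast_mul, hkk]; push_cast; ring
    have h3 : (k:ℝ)*((k:ℝ)-1) ≤ (k:ℝ)*((q-m:ℕ):ℝ) := mul_le_mul_of_nonneg_left hqmr hk0
    rw [hmr] at h1
    have hident : ((q:ℝ)+1-(k:ℝ))*((q:ℝ)-1)+1
        = (q:ℝ)^2 - (k:ℝ)*(q:ℝ) + (k:ℝ) := by ring
    linarith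
  refine ⟨k, ?_, ⟨P, hknot⟩, hlowR, hupR⟩
  by_contra hcon
  push_neg at hcon
  set f : ℤ := ⌊κr⌋ with hfdef
  set cc : ℤ := ⌈κr⌉ with hccdef
  have hf0 : (0:ℤ) ≤ f := Int.floor_nonneg.mpr hκ0
  have hfκ : (f:ℝ) ≤ κr := Int.floor_le κr
  have hκc : κr ≤ (cc:ℝ) := Int.le_ceil κr
  have hcf1 : cc ≤ f + 1 := Int.ceil_le_floor_add_one κr
  have hfc : f ≤ cc := Int.floor_le_ceil κr
  have hf0r : (0:ℝ) ≤ (f:ℝ) := by exact_mod_cast hf0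
  have hf1pos : (0:ℝ) < (f:ℝ) + 1 := by linarith
  rcases le_or_gt (m:ℤ) (f+1) with hmf | hmf
  · -- small max knot: pair counting contradiction
    have hmr0 : (0:ℝ) < (m:ℝ) := by exact_mod_cast hm1
    have hmfr : (m:ℝ) ≤ (f:ℝ) + 1 := by exact_mod_cast hmf
    have hA : ((q:ℝ)+1)*(q:ℝ) + (m:ℝ)*(N:ℝ) ≤ (m:ℝ)*(((q:ℝ)+1)*(q:ℝ)) := by
      exact_mod_cast hclaimA
    have hNle : (N:ℝ) ≤ ((q:ℝ)+1)*(q:ℝ) - ((q:ℝ)+1)*(q:ℝ)/(m:ℝ) := by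
      have key : (N:ℝ) * (m:ℝ) ≤ (((q:ℝ)+1)*(q:ℝ) - ((q:ℝ)+1)*(q:ℝ)/(m:ℝ)) * (m:ℝ) := by
        field_simp
        linarith
      exact le_of_mul_le_mul_right key hmr0
    have hmono : ((q:ℝ)+1)*(q:ℝ)/((f:ℝ)+1) ≤ ((q:ℝ)+1)*(q:ℝ)/(m:ℝ) := by
      apply div_le_div_of_nonneg_left _ hmr0 hmfr
      positivity
    have hbeq : (q:ℝ)^2 - (q:ℝ)*((q:ℝ)-(f:ℝ))/((f:ℝ)+1)
        = ((q:ℝ)+1)*(q:ℝ) - ((q:ℝ)+1)*(q:ℝ)/((f:ℝ)+1) := by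
      field_simp
      ring
    have hminb := min_le_right ((cc:ℝ)*((q:ℝ)-(cc:ℝ))) ((q:ℝ)*((q:ℝ)-(f:ℝ))/((f:ℝ)+1))
    linarith [hsize, hNle, hmono, hbeq, hminb]
  · -- large max knot: use the knot bounds
    have hm2 : (f:ℝ) + 2 ≤ (m:ℝ) := by
      have : f + 2 ≤ (m:ℤ) := by omega
      exact_mod_cast this
    have hkb : (k:ℝ) ≤ (q:ℝ) - 1 - (f:ℝ) := by linarith [hmr, hm2]
    have hck : (cc:ℝ) ≤ (k:ℝ) := hcon
    have hexp : (k:ℝ)*((q:ℝ)-(k:ℝ)) = (k:ℝ)*(q:ℝ) - (k:ℝ)^2 := by ring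
    have hmin : min ((cc:ℝ)*((q:ℝ)-(cc:ℝ))) ((q:ℝ)*((q:ℝ)-(f:ℝ))/((f:ℝ)+1))
        ≤ (k:ℝ)*((q:ℝ)-(k:ℝ)) := by
      rcases eq_or_lt_of_le hfc with hceq | hclt
      · -- κ is an integer
        have hκf : κr = (f:ℝ) := le_antisymm (by rw [hceq]; exact hκc) hfκ
        have hqf : (q:ℝ) = (f:ℝ)^2 + (f:ℝ) := by rw [← hκq, hκf]
        have hbval : (q:ℝ)*((q:ℝ)-(f:ℝ))/((f:ℝ)+1) = (f:ℝ)^3 := by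
          rw [hqf]; field_simp; ring
        have hfk : (f:ℝ) ≤ (k:ℝ) := by
          have : ((f:ℤ):ℝ) = ((cc:ℤ):ℝ) := by exact_mod_cast hceq
          linarith [hck, this]
        have hkf2 : (k:ℝ) ≤ (f:ℝ)^2 - 1 := by nlinarith [hkb, hqf]
        have hid : (k:ℝ)*((q:ℝ)-(k:ℝ)) - (f:ℝ)^3
            = ((k:ℝ)-(f:ℝ))*((f:ℝ)^2-1-(k:ℝ)) + ((k:ℝ)-(f:ℝ)) := by rw [hqf]; ring
        have hprod : 0 ≤ ((k:ℝ)-(f:ℝ))*((f:ℝ)^2-1-(k:ℝ)) :=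
          mul_nonneg (by linarith) (by linarith)
        calc min _ _ ≤ (q:ℝ)*((q:ℝ)-(f:ℝ))/((f:ℝ)+1) := min_le_right _ _
          _ = (f:ℝ)^3 := hbval
          _ ≤ (k:ℝ)*((q:ℝ)-(k:ℝ)) := by linarith
      · -- cc = f + 1
        have hccf : (cc:ℝ) = (f:ℝ) + 1 := by
          have : cc = f + 1 := le_antisymm hcf1 (by omega)
          exact_mod_cast this
        have hkq : (k:ℝ) ≤ (q:ℝ) - (cc:ℝ) := by linarith [hccf, hkb]
        have hid : (k:ℝ)*((q:ℝ)-(k:ℝ)) - (cc:ℝ)*((q:ℝ)-(cc:ℝ))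
            = ((k:ℝ)-(cc:ℝ))*((q:ℝ)-(cc:ℝ)-(k:ℝ)) := by ring
        have hprod : 0 ≤ ((k:ℝ)-(cc:ℝ))*((q:ℝ)-(cc:ℝ)-(k:ℝ)) :=
          mul_nonneg (by linarith) (by linarith)
        calc min _ _ ≤ (cc:ℝ)*((q:ℝ)-(cc:ℝ)) := min_le_left _ _
          _ ≤ (k:ℝ)*((q:ℝ)-(k:ℝ)) := by linarith
    linarith [hsize, hupR, hmin, hexp]
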